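/- Let G be a proper interval graph with unit-interval representation and distinct start points, vertices ordered v₁, ..., v_n by start point, with s = v₁. Suppose F is an edge set such that in H = G − F the distances from s are monotone along the ordering (i < j implies dist_H(s, v_i) ≤ dist_H(s, v_j)). Then for every vertex v_j and every shortest s-v_j path in H, there exists a shortest s-v_j path in H that is monotone, i.e., visits vertices in strictly increasing order of their start points. -/

import Mathlib

/-- In a proper interval graph (unit intervals, distinct start points) with `s` the
first vertex, if after deleting an edge set `F` the distances from `s` are monotone in
the start points, then every vertex reachable from `s` admits a shortest path from `s`
that is monotone (visits vertices in strictly increasing order of start points). -/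
theorem proper_interval_monotone_shortest_path {V : Type*} (G : SimpleGraph V)
    (b : V → ℝ) (hinj : Function.Injective b)
    (hadj : ∀ u v, G.Adj u v ↔ u ≠ v ∧ |b u - b v| ≤ 1)
    (s : V) (hfirst : ∀ v, b s ≤ b v)
    (F : Set (Sym2 V))
    (hmono : ∀ u w, b u ≤ b w →
      (G.deleteEdges F).edist s u ≤ (G.deleteEdges F).edist s w) :
    ∀ v : V, (G.deleteEdges F).Reachable s v →
      ∃ p : (G.deleteEdges F).Walk s v, p.IsPath ∧
        (p.length : ℕ∞) = (G.deleteEdges F).edist s v ∧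
        (p.support.map b).Chain' (· < ·) := by
  set H := G.deleteEdges F with hH
  have hedist : ∀ v, H.Reachable s v → H.edist s v = (H.dist s v : ℕ∞) := by
    intro v hv
    have h1 : H.edist s v ≠ ⊤ := SimpleGraph.edist_ne_top_iff_reachable.mpr hv
    rw [SimpleGraph.dist]
    exact (ENat.coe_toNat h1).symm
  suffices key : ∀ n : ℕ, ∀ v, H.Reachable s v → H.dist s v = n →
      ∃ p : H.Walk s v, p.IsPath ∧ p.length = H.dist s v ∧
        (p.support.map b).Chain' (· < ·) by
    intro v hv
    obtain ⟨p, hp, hl, hc⟩ := key _ v hv rfl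
    exact ⟨p, hp, by rw [hl, hedist v hv], hc⟩
  intro n
  induction n with
  | zero =>
    intro v hv hd
    obtain rfl : s = v := hv.dist_eq_zero_iff.mp hd
    exact ⟨.nil, by simp, by simp [hd], List.isChain_singleton _⟩
  | succ n ih =>
    intro v hv hd
    obtain ⟨p, hp⟩ := hv.exists_walk_length_eq_dist
    -- look at the last edge of p
    have hr : p.reverse.length = n + 1 := by rw [SimpleGraph.Walk.length_reverse, hp, hd]
    cases hq : p.reverse with
    | nil => rw [hq] at hr; simp at hr
    | @cons _ u _ h q =>
      rw [hq] at hr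
      simp only [SimpleGraph.Walk.length_cons, Nat.succ.injEq] at hr
      have hru : H.Reachable s u := ⟨q.reverse⟩
      have hdu : H.dist s u = n := by
        have h1 : H.dist s u ≤ n := by
          have := SimpleGraph.dist_le q.reverse
          rwa [SimpleGraph.Walk.length_reverse, hr] at this
        have h2 : n ≤ H.dist s u := by
          obtain ⟨w, hw⟩ := hru.exists_walk_length_eq_dist
          have := SimpleGraph.dist_le (w.concat h.symm)
          rw [SimpleGraph.Walk.length_concat, hw, hd] at this
          omega
        omega
      obtain ⟨pu, hpu, hlu, hcu⟩ := ih u hru hdu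
      have hne : b u ≠ b v := fun hb => (h.ne) (hinj hb).symm
      have hbu : b u < b v := by
        rcases lt_or_gt_of_ne hne with h' | h'
        · exact h'
        · exfalso
          have := hmono v u (le_of_lt h')
          rw [hedist v hv, hedist u hru, hdu, hd] at this
          have := Nat.cast_le (α := ℕ∞) |>.mp (by exact_mod_cast this)
          omega
      refine ⟨pu.concat h.symm, ?_, ?_, ?_⟩
      rotate_left
      · rw [SimpleGraph.Walk.length_concat, hlu, hdu, hd]
      · -- chain'
        have hlast : ∀ x ∈ (pu.support.map b).getLast?, x < b v := by
          intro x hx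
          have hne' : pu.support.map b ≠ [] := by simp
          rw [List.getLast?_eq_getLast hne'] at hx
          rw [Option.mem_def, Option.some.injEq] at hx
          subst hx
          rw [List.getLast_map]
          · rw [pu.getLast_support]; exact hbu
        unfold List.Chain'
        rw [SimpleGraph.Walk.support_concat, List.map_append,
          List.isChain_append]
        refine ⟨hcu, by simp, ?_⟩
        intro x hx y hy
        simp only [List.map_cons, List.map_nil, List.head?_cons, Option.mem_def,
          Option.some.injEq] at hy
        subst hy
        exact hlast x hx
      · -- IsPath from strict chain
        apply SimpleGraph.Walk.IsPath.mk'
        have hchain : ((pu.concat h.symm).support.map b).Chain' (· < ·) := by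
          have hlast : ∀ x ∈ (pu.support.map b).getLast?, x < b v := by
            intro x hx
            have hne' : pu.support.map b ≠ [] := by simp
            rw [List.getLast?_eq_getLast hne'] at hx
            rw [Option.mem_def, Option.some.injEq] at hx
            subst hx
            rw [List.getLast_map]
            · rw [pu.getLast_support]; exact hbu
          unfold List.Chain'
          rw [SimpleGraph.Walk.support_concat, List.map_append,
            List.isChain_append]
          refine ⟨hcu, by simp, ?_⟩
          intro x hx y hy
          simp only [List.map_cons, List.map_nil, List.head?_cons, Option.mem_def,
            Option.some.injEq] at hy
          subst hy
          exact hlast x hx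
        have hpw : ((pu.concat h.symm).support.map b).Pairwise (· < ·) :=
          List.isChain_iff_pairwise.mp hchain
        have hnd : ((pu.concat h.symm).support.map b).Nodup := hpw.imp ne_of_lt
        exact hnd.of_map b
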